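/- (Semiflow property transfers from a.s. pointwise identities to everywhere identities under joint continuity.) Let φ: {(s,t,x): 0 ≤ s ≤ t, x ∈ ℝ^d} × Ω → ℝ^d be jointly continuous in (s,t,x) for every ω. Suppose that for each fixed (s,t,u,x) with s ≤ t ≤ u, the identity φ_{s,u}(x,ω) = φ_{t,u}(φ_{s,t}(x,ω), ω) holds for ω outside a null set N_{s,t,u,x}, and φ_{s,s}(x,ω) = x for ω outside a null set N_{s,x}. Then there is a single null set Ñ and a modification φ̃ (equal to φ off Ñ and to the trivial map (s,t,x) ↦ x on Ñ) such that φ̃_{s,u}(x,ω) = φ̃_{t,u}(φ̃_{s,t}(x,ω), ω) and φ̃_{s,s}(x,ω) = x hold for ALL s ≤ t ≤ u, x ∈ ℝ^d, and ω ∈ Ω. -/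

import Mathlib

open MeasureTheory Set Filter Topology

lemma eqOn_of_dense' {X Y : Type*} [TopologicalSpace X] [TopologicalSpace Y] [T2Space Y]
    {f g : X → Y} {S D : Set X} (hD : D ⊆ S) (hdense : S ⊆ closure D)
    (hf : ContinuousOn f S) (hg : ContinuousOn g S) (h : Set.EqOn f g D) :
    Set.EqOn f g S := by
  intro x hx
  have hne : (𝓝[D] x).NeBot := mem_closure_iff_nhdsWithin_neBot.mp (hdense hx)
  have hf' : Tendsto f (𝓝[D] x) (𝓝 (f x)) := (hf x hx).mono_left (nhdsWithin_mono x hD)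
  have hg' : Tendsto g (𝓝[D] x) (𝓝 (g x)) := (hg x hx).mono_left (nhdsWithin_mono x hD)
  have hfg : Tendsto f (𝓝[D] x) (𝓝 (g x)) :=
    hg'.congr' (by filter_upwards [self_mem_nhdsWithin] with y hy using (h hy).symm)
  exact tendsto_nhds_unique hf' hfg

lemma denseSimplex3 : {v : ℝ × ℝ × ℝ | 0 ≤ v.1 ∧ v.1 ≤ v.2.1 ∧ v.2.1 ≤ v.2.2} ⊆
    closure {v : ℝ × ℝ × ℝ | (∃ q : ℚ, (q:ℝ) = v.1) ∧ (∃ q : ℚ, (q:ℝ) = v.2.1) ∧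
      (∃ q : ℚ, (q:ℝ) = v.2.2) ∧ 0 ≤ v.1 ∧ v.1 ≤ v.2.1 ∧ v.2.1 ≤ v.2.2} := by
  rintro ⟨s, t, u⟩ ⟨hs, hst, htu⟩
  rw [Metric.mem_closure_iff]
  intro ε hε
  obtain ⟨q1, hq1a, hq1b⟩ := exists_rat_btwn (show s < s + ε by linarith)
  obtain ⟨q2, hq2a, hq2b⟩ := exists_rat_btwn (show max t (q1:ℝ) < t + ε by
    apply max_lt <;> linarith [le_max_left t (q1:ℝ)])
  obtain ⟨q3, hq3a, hq3b⟩ := exists_rat_btwn (show max u (q2:ℝ) < u + ε by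
    apply max_lt <;> [linarith; skip]
    have := lt_of_le_of_lt (le_max_left t (q1:ℝ)) hq2a
    linarith)
  have ht2 : t < q2 := lt_of_le_of_lt (le_max_left _ _) hq2a
  have h12 : (q1:ℝ) < q2 := lt_of_le_of_lt (le_max_right _ _) hq2a
  have hu3 : u < q3 := lt_of_le_of_lt (le_max_left _ _) hq3a
  have h23 : (q2:ℝ) < q3 := lt_of_le_of_lt (le_max_right _ _) hq3a
  refine ⟨((q1:ℝ), (q2:ℝ), (q3:ℝ)), ⟨⟨q1, rfl⟩, ⟨q2, rfl⟩, ⟨q3, rfl⟩, by linarith, by linarith, by linarith⟩, ?_⟩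
  simp only [Prod.dist_eq, Real.dist_eq]
  apply max_lt (abs_sub_lt_iff.mpr ⟨by linarith, by linarith⟩)
  exact max_lt (abs_sub_lt_iff.mpr ⟨by linarith, by linarith⟩)
    (abs_sub_lt_iff.mpr ⟨by linarith, by linarith⟩)

lemma denseIci : {v : ℝ | 0 ≤ v} ⊆
    closure {v : ℝ | (∃ q : ℚ, (q:ℝ) = v) ∧ 0 ≤ v} := by
  intro s hs
  rw [Metric.mem_closure_iff]
  intro ε hε
  obtain ⟨q, hqa, hqb⟩ := exists_rat_btwn (show s < s + ε by linarith)
  refine ⟨(q:ℝ), ⟨⟨q, rfl⟩, by simp only [mem_setOf_eq] at hs; linarith⟩, ?_⟩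
  rw [Real.dist_eq]
  exact abs_sub_lt_iff.mpr ⟨by linarith, by linarith⟩
lemma flow_comp_ext {d : ℕ} {Ω : Type*}
    (φ : ℝ → ℝ → EuclideanSpace ℝ (Fin d) → Ω → EuclideanSpace ℝ (Fin d)) (ω : Ω)
    (hc : ContinuousOn (fun p : ℝ × ℝ × EuclideanSpace ℝ (Fin d) => φ p.1 p.2.1 p.2.2 ω)
      {p : ℝ × ℝ × EuclideanSpace ℝ (Fin d) | 0 ≤ p.1 ∧ p.1 ≤ p.2.1})
    {T : Set (EuclideanSpace ℝ (Fin d))} (hTd : Dense T)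
    (hq : ∀ (q1 q2 q3 : ℚ), ∀ x ∈ T, 0 ≤ (q1:ℝ) → (q1:ℝ) ≤ q2 → (q2:ℝ) ≤ q3 →
      φ q1 q3 x ω = φ q2 q3 (φ q1 q2 x ω) ω) :
    ∀ (s t u : ℝ) (x : EuclideanSpace ℝ (Fin d)), 0 ≤ s → s ≤ t → t ≤ u →
      φ s u x ω = φ t u (φ s t x ω) ω := by
  have hDS : ({v : ℝ × ℝ × ℝ | (∃ q : ℚ, (q:ℝ) = v.1) ∧ (∃ q : ℚ, (q:ℝ) = v.2.1) ∧
        (∃ q : ℚ, (q:ℝ) = v.2.2) ∧ 0 ≤ v.1 ∧ v.1 ≤ v.2.1 ∧ v.2.1 ≤ v.2.2} ×ˢ T) ⊆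
      ({v : ℝ × ℝ × ℝ | 0 ≤ v.1 ∧ v.1 ≤ v.2.1 ∧ v.2.1 ≤ v.2.2} ×ˢ
        (univ : Set (EuclideanSpace ℝ (Fin d)))) :=
    prod_mono (fun v hv => ⟨hv.2.2.2.1, hv.2.2.2.2.1, hv.2.2.2.2.2⟩) (subset_univ T)
  have hdense : ({v : ℝ × ℝ × ℝ | 0 ≤ v.1 ∧ v.1 ≤ v.2.1 ∧ v.2.1 ≤ v.2.2} ×ˢ
        (univ : Set (EuclideanSpace ℝ (Fin d)))) ⊆
      closure ({v : ℝ × ℝ × ℝ | (∃ q : ℚ, (q:ℝ) = v.1) ∧ (∃ q : ℚ, (q:ℝ) = v.2.1) ∧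
        (∃ q : ℚ, (q:ℝ) = v.2.2) ∧ 0 ≤ v.1 ∧ v.1 ≤ v.2.1 ∧ v.2.1 ≤ v.2.2} ×ˢ T) := by
    rw [closure_prod_eq]
    exact prod_mono denseSimplex3 (by rw [hTd.closure_eq])
  have hcf : ContinuousOn
      (fun p : (ℝ × ℝ × ℝ) × EuclideanSpace ℝ (Fin d) => φ p.1.1 p.1.2.2 p.2 ω)
      ({v : ℝ × ℝ × ℝ | 0 ≤ v.1 ∧ v.1 ≤ v.2.1 ∧ v.2.1 ≤ v.2.2} ×ˢ univ) := by
    have := hc.comp (f := fun p : (ℝ × ℝ × ℝ) × EuclideanSpace ℝ (Fin d) =>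
        ((p.1.1, p.1.2.2, p.2) : ℝ × ℝ × EuclideanSpace ℝ (Fin d)))
      (by fun_prop : Continuous (fun p : (ℝ × ℝ × ℝ) × EuclideanSpace ℝ (Fin d) =>
        ((p.1.1, p.1.2.2, p.2) : ℝ × ℝ × EuclideanSpace ℝ (Fin d)))).continuousOn
      (t := {p : ℝ × ℝ × EuclideanSpace ℝ (Fin d) | 0 ≤ p.1 ∧ p.1 ≤ p.2.1})
      (s := {v : ℝ × ℝ × ℝ | 0 ≤ v.1 ∧ v.1 ≤ v.2.1 ∧ v.2.1 ≤ v.2.2} ×ˢ univ) ?_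
    · exact this
    · rintro ⟨⟨s, t, u⟩, x⟩ ⟨⟨h0, h1, h2⟩, -⟩
      exact ⟨h0, h1.trans h2⟩
  have hck : ContinuousOn
      (fun p : (ℝ × ℝ × ℝ) × EuclideanSpace ℝ (Fin d) =>
        ((p.1.2.1, p.1.2.2, φ p.1.1 p.1.2.1 p.2 ω) : ℝ × ℝ × EuclideanSpace ℝ (Fin d)))
      ({v : ℝ × ℝ × ℝ | 0 ≤ v.1 ∧ v.1 ≤ v.2.1 ∧ v.2.1 ≤ v.2.2} ×ˢ univ) := by
    refine (continuous_fst.snd.fst.continuousOn).prodMk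
      ((continuous_fst.snd.snd.continuousOn).prodMk ?_)
    have := hc.comp (f := fun p : (ℝ × ℝ × ℝ) × EuclideanSpace ℝ (Fin d) =>
        ((p.1.1, p.1.2.1, p.2) : ℝ × ℝ × EuclideanSpace ℝ (Fin d)))
      (by fun_prop : Continuous (fun p : (ℝ × ℝ × ℝ) × EuclideanSpace ℝ (Fin d) =>
        ((p.1.1, p.1.2.1, p.2) : ℝ × ℝ × EuclideanSpace ℝ (Fin d)))).continuousOn
      (t := {p : ℝ × ℝ × EuclideanSpace ℝ (Fin d) | 0 ≤ p.1 ∧ p.1 ≤ p.2.1})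
      (s := {v : ℝ × ℝ × ℝ | 0 ≤ v.1 ∧ v.1 ≤ v.2.1 ∧ v.2.1 ≤ v.2.2} ×ˢ univ) ?_
    · exact this
    · rintro ⟨⟨s, t, u⟩, x⟩ ⟨⟨h0, h1, h2⟩, -⟩
      exact ⟨h0, h1⟩
  have hcg : ContinuousOn
      (fun p : (ℝ × ℝ × ℝ) × EuclideanSpace ℝ (Fin d) =>
        φ p.1.2.1 p.1.2.2 (φ p.1.1 p.1.2.1 p.2 ω) ω)
      ({v : ℝ × ℝ × ℝ | 0 ≤ v.1 ∧ v.1 ≤ v.2.1 ∧ v.2.1 ≤ v.2.2} ×ˢ univ) := by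
    have := hc.comp hck ?_
    · exact this
    · rintro ⟨⟨s, t, u⟩, x⟩ ⟨⟨h0, h1, h2⟩, -⟩
      exact ⟨h0.trans h1, h2⟩
  have heq : Set.EqOn
      (fun p : (ℝ × ℝ × ℝ) × EuclideanSpace ℝ (Fin d) => φ p.1.1 p.1.2.2 p.2 ω)
      (fun p : (ℝ × ℝ × ℝ) × EuclideanSpace ℝ (Fin d) =>
        φ p.1.2.1 p.1.2.2 (φ p.1.1 p.1.2.1 p.2 ω) ω)
      ({v : ℝ × ℝ × ℝ | (∃ q : ℚ, (q:ℝ) = v.1) ∧ (∃ q : ℚ, (q:ℝ) = v.2.1) ∧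
        (∃ q : ℚ, (q:ℝ) = v.2.2) ∧ 0 ≤ v.1 ∧ v.1 ≤ v.2.1 ∧ v.2.1 ≤ v.2.2} ×ˢ T) := by
    rintro ⟨⟨s, t, u⟩, x⟩ ⟨⟨⟨q1, hq1⟩, ⟨q2, hq2⟩, ⟨q3, hq3⟩, h0, h1, h2⟩, hx⟩
    simp only at hq1 hq2 hq3 h0 h1 h2 hx ⊢
    subst hq1 hq2 hq3
    exact hq q1 q2 q3 x hx h0 h1 h2
  intro s t u x h0 h1 h2
  exact eqOn_of_dense' hDS hdense hcf hcg heq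
    (show ((s, t, u), x) ∈ _ ×ˢ _ from ⟨⟨h0, h1, h2⟩, mem_univ x⟩)

lemma flow_id_ext {d : ℕ} {Ω : Type*}
    (φ : ℝ → ℝ → EuclideanSpace ℝ (Fin d) → Ω → EuclideanSpace ℝ (Fin d)) (ω : Ω)
    (hc : ContinuousOn (fun p : ℝ × ℝ × EuclideanSpace ℝ (Fin d) => φ p.1 p.2.1 p.2.2 ω)
      {p : ℝ × ℝ × EuclideanSpace ℝ (Fin d) | 0 ≤ p.1 ∧ p.1 ≤ p.2.1})
    {T : Set (EuclideanSpace ℝ (Fin d))} (hTd : Dense T)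
    (hq : ∀ (q : ℚ), ∀ x ∈ T, 0 ≤ (q:ℝ) → φ q q x ω = x) :
    ∀ (s : ℝ) (x : EuclideanSpace ℝ (Fin d)), 0 ≤ s → φ s s x ω = x := by
  have hDS : ({v : ℝ | (∃ q : ℚ, (q:ℝ) = v) ∧ 0 ≤ v} ×ˢ T) ⊆
      ({v : ℝ | 0 ≤ v} ×ˢ (univ : Set (EuclideanSpace ℝ (Fin d)))) :=
    prod_mono (fun v hv => hv.2) (subset_univ T)
  have hdense : ({v : ℝ | 0 ≤ v} ×ˢ (univ : Set (EuclideanSpace ℝ (Fin d)))) ⊆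
      closure ({v : ℝ | (∃ q : ℚ, (q:ℝ) = v) ∧ 0 ≤ v} ×ˢ T) := by
    rw [closure_prod_eq]
    exact prod_mono denseIci (by rw [hTd.closure_eq])
  have hcf : ContinuousOn (fun p : ℝ × EuclideanSpace ℝ (Fin d) => φ p.1 p.1 p.2 ω)
      ({v : ℝ | 0 ≤ v} ×ˢ univ) := by
    have := hc.comp (f := fun p : ℝ × EuclideanSpace ℝ (Fin d) =>
        ((p.1, p.1, p.2) : ℝ × ℝ × EuclideanSpace ℝ (Fin d)))
      (by fun_prop : Continuous (fun p : ℝ × EuclideanSpace ℝ (Fin d) =>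
        ((p.1, p.1, p.2) : ℝ × ℝ × EuclideanSpace ℝ (Fin d)))).continuousOn
      (t := {p : ℝ × ℝ × EuclideanSpace ℝ (Fin d) | 0 ≤ p.1 ∧ p.1 ≤ p.2.1})
      (s := {v : ℝ | 0 ≤ v} ×ˢ univ) ?_
    · exact this
    · rintro ⟨s, x⟩ ⟨hs, -⟩
      exact ⟨hs, le_refl s⟩
  have heq : Set.EqOn (fun p : ℝ × EuclideanSpace ℝ (Fin d) => φ p.1 p.1 p.2 ω)
      (fun p => p.2) ({v : ℝ | (∃ q : ℚ, (q:ℝ) = v) ∧ 0 ≤ v} ×ˢ T) := by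
    rintro ⟨s, x⟩ ⟨⟨⟨q, hq'⟩, h0⟩, hx⟩
    simp only at hq' h0 hx ⊢
    subst hq'
    exact hq q x hx h0
  intro s x h0
  exact eqOn_of_dense' hDS hdense hcf continuous_snd.continuousOn heq
    (show ((s, x) : ℝ × EuclideanSpace ℝ (Fin d)) ∈ _ ×ˢ _ from ⟨h0, mem_univ x⟩)

/-- a.s.-pointwise flow identities upgrade to everywhere identities under
joint continuity: there is a single null set `Ñ` and a modification `φ̃` (equal to `φ` off
`Ñ` and trivial on `Ñ`) satisfying the semiflow identities for ALL parameters and `ω`. -/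
theorem semiflow_modification {d : ℕ} {Ω : Type*} {m0 : MeasurableSpace Ω}
    (μ : Measure Ω) [IsProbabilityMeasure μ]
    (φ : ℝ → ℝ → EuclideanSpace ℝ (Fin d) → Ω → EuclideanSpace ℝ (Fin d))
    (hcont : ∀ ω, ContinuousOn
      (fun p : ℝ × ℝ × EuclideanSpace ℝ (Fin d) => φ p.1 p.2.1 p.2.2 ω)
      {p : ℝ × ℝ × EuclideanSpace ℝ (Fin d) | 0 ≤ p.1 ∧ p.1 ≤ p.2.1})
    (hcomp : ∀ (s t u : ℝ) (x : EuclideanSpace ℝ (Fin d)), 0 ≤ s → s ≤ t → t ≤ u →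
      ∀ᵐ ω ∂μ, φ s u x ω = φ t u (φ s t x ω) ω)
    (hid : ∀ (s : ℝ) (x : EuclideanSpace ℝ (Fin d)), 0 ≤ s →
      ∀ᵐ ω ∂μ, φ s s x ω = x) :
    ∃ N : Set Ω, MeasurableSet N ∧ μ N = 0 ∧
      ∃ φ' : ℝ → ℝ → EuclideanSpace ℝ (Fin d) → Ω → EuclideanSpace ℝ (Fin d),
        (∀ ω ∉ N, ∀ s t x, φ' s t x ω = φ s t x ω) ∧
        (∀ ω ∈ N, ∀ s t x, φ' s t x ω = x) ∧
        (∀ ω, ∀ (s t u : ℝ) (x : EuclideanSpace ℝ (Fin d)), 0 ≤ s → s ≤ t → t ≤ u →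
          φ' s u x ω = φ' t u (φ' s t x ω) ω) ∧
        (∀ ω, ∀ (s : ℝ) (x : EuclideanSpace ℝ (Fin d)), 0 ≤ s → φ' s s x ω = x) := by
  classical
  obtain ⟨T, hTc, hTd⟩ := TopologicalSpace.exists_countable_dense (EuclideanSpace ℝ (Fin d))
  haveI : Countable T := hTc.to_subtype
  -- exceptional sets
  set A : ℚ × ℚ × ℚ × T → Set Ω := fun p =>
    {ω | 0 ≤ (p.1:ℝ) ∧ (p.1:ℝ) ≤ (p.2.1:ℝ) ∧ (p.2.1:ℝ) ≤ (p.2.2.1:ℝ) ∧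
      φ p.1 p.2.2.1 p.2.2.2 ω ≠ φ p.2.1 p.2.2.1 (φ p.1 p.2.1 p.2.2.2 ω) ω} with hA
  set B : ℚ × T → Set Ω := fun p =>
    {ω | 0 ≤ (p.1:ℝ) ∧ φ p.1 p.1 p.2 ω ≠ (p.2 : EuclideanSpace ℝ (Fin d))} with hB
  have hAnull : ∀ p, μ (A p) = 0 := by
    rintro ⟨q1, q2, q3, x⟩
    by_cases h : 0 ≤ (q1:ℝ) ∧ (q1:ℝ) ≤ (q2:ℝ) ∧ (q2:ℝ) ≤ (q3:ℝ)
    · have := (hcomp q1 q2 q3 x h.1 h.2.1 h.2.2)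
      rw [MeasureTheory.ae_iff] at this
      refine measure_mono_null ?_ this
      rintro ω ⟨-, -, -, hne⟩
      exact hne
    · have : A (q1, q2, q3, x) = ∅ := by
        ext ω
        simp only [hA, Set.mem_setOf_eq, Set.mem_empty_iff_false, iff_false]
        rintro ⟨h0, h1, h2, -⟩
        exact h ⟨h0, h1, h2⟩
      rw [this, measure_empty]
  have hBnull : ∀ p, μ (B p) = 0 := by
    rintro ⟨q, x⟩
    by_cases h : 0 ≤ (q:ℝ)
    · have := hid q x h
      rw [MeasureTheory.ae_iff] at this
      refine measure_mono_null ?_ this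
      rintro ω ⟨-, hne⟩
      exact hne
    · have : B (q, x) = ∅ := by
        ext ω
        simp only [hB, Set.mem_setOf_eq, Set.mem_empty_iff_false, iff_false]
        rintro ⟨h0, -⟩
        exact h h0
      rw [this, measure_empty]
  set N0 : Set Ω := (⋃ p, A p) ∪ (⋃ p, B p) with hN0
  have hN0null : μ N0 = 0 :=
    measure_union_null (measure_iUnion_null hAnull) (measure_iUnion_null hBnull)
  refine ⟨toMeasurable μ N0, measurableSet_toMeasurable μ N0,
    by rw [measure_toMeasurable]; exact hN0null,
    fun s t x ω => if ω ∈ toMeasurable μ N0 then x else φ s t x ω, ?_, ?_, ?_, ?_⟩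
  · intro ω hω s t x; simp [hω]
  · intro ω hω s t x; simp [hω]
  · intro ω s t u x h0 h1 h2
    by_cases hω : ω ∈ toMeasurable μ N0
    · simp [hω]
    · simp only [hω, if_false]
      have hωN : ω ∉ N0 := fun h => hω (subset_toMeasurable μ N0 h)
      refine flow_comp_ext φ ω (hcont ω) hTd ?_ s t u x h0 h1 h2
      intro q1 q2 q3 x hx hq0 hq1 hq2
      by_contra hne
      exact hωN (Or.inl (Set.mem_iUnion.mpr ⟨(q1, q2, q3, ⟨x, hx⟩), hq0, hq1, hq2, hne⟩))
  · intro ω s x h0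
    by_cases hω : ω ∈ toMeasurable μ N0
    · simp [hω]
    · simp only [hω, if_false]
      have hωN : ω ∉ N0 := fun h => hω (subset_toMeasurable μ N0 h)
      refine flow_id_ext φ ω (hcont ω) hTd ?_ s x h0
      intro q x hx hq0
      by_contra hne
      exact hωN (Or.inr (Set.mem_iUnion.mpr ⟨(q, ⟨x, hx⟩), hq0, hne⟩))
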